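/- There exist infinitely many rational numbers x₁ such that both x₁ and (5/4)²·x₁ are x-coordinates of rational points on the unit circle x² + y² = 1. -/

import Mathlib

/- Auxiliary valuation helpers -/
lemma v2_oddq (n : ℕ) (hn : ¬ 2 ∣ n) : padicValRat 2 (n:ℚ) = 0 := by
  rw [padicValRat.of_nat, padicValNat.eq_zero_of_not_dvd hn]; rfl

lemma v2_powq (m n : ℕ) (hn : ¬ 2 ∣ n) (h0 : n ≠ 0) :
    padicValRat 2 ((2:ℚ)^m * n) = m := by
  rw [padicValRat.mul (pow_ne_zero _ two_ne_zero) (by exact_mod_cast h0),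
    padicValRat.pow (2:ℚ), v2_oddq n hn,
    show ((2:ℚ)) = ((2:ℕ):ℚ) by norm_num, padicValRat.self (by norm_num)]
  ring

lemma ne_zero_of_v {q : ℚ} {m : ℤ} (h : padicValRat 2 q = m) (hm : m ≠ 0) : q ≠ 0 := by
  intro h0; rw [h0, padicValRat.zero] at h; exact hm h.symm

lemma add_eq_of_lt' {q r : ℚ} (hq : q ≠ 0)
    (hval : padicValRat 2 q < padicValRat 2 r) :
    padicValRat 2 (q + r) = padicValRat 2 q := by
  by_cases hr : r = 0
  · simp [hr]
  have hqr : q + r ≠ 0 := by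
    intro h
    have : r = -q := by linarith [eq_neg_of_add_eq_zero_right h]
    rw [this, padicValRat.neg] at hval; exact lt_irrefl _ hval
  exact padicValRat.add_eq_of_lt hqr hq hr hval

lemma v160000 : padicValRat 2 (160000:ℚ) = 8 := by
  rw [show (160000:ℚ) = (2:ℚ)^8 * (625:ℕ) by norm_num]; exact v2_powq 8 625 (by decide) (by decide)

lemma v1762 : padicValRat 2 (1762:ℚ) = 1 := by
  rw [show (1762:ℚ) = (2:ℚ)^1 * (881:ℕ) by norm_num]; exact v2_powq 1 881 (by decide) (by decide)

lemma v881 : padicValRat 2 (881:ℚ) = 0 := by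
  rw [show (881:ℚ) = ((881:ℕ):ℚ) by norm_num]; exact v2_oddq 881 (by decide)

lemma v3 : padicValRat 2 (3:ℚ) = 0 := by
  rw [show (3:ℚ) = ((3:ℕ):ℚ) by norm_num]; exact v2_oddq 3 (by decide)

lemma v2two : padicValRat 2 (2:ℚ) = 1 := by
  rw [show (2:ℚ) = (2:ℚ)^1 * ((1:ℕ):ℚ) by norm_num]; exact v2_powq 1 1 (by decide) (by decide)

/-- Main valuation step lemma on the curve `Y² = X³ - 881X² + 160000X`. -/
lemma step_key (X Y : ℚ) (k : ℤ) (hk : 3 ≤ k)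
    (hC : Y^2 = X^3 - 881*X^2 + 160000*X)
    (hvX : padicValRat 2 X = -(2*k)) :
    Y ≠ 0 ∧ X^2 - 160000 ≠ 0 ∧ padicValRat 2 Y = -(3*k) ∧
    padicValRat 2 ((3*X^2 - 1762*X + 160000)/(2*Y)) = -(k+1) := by
  have hX : X ≠ 0 := ne_zero_of_v hvX (by omega)
  have vX2 : padicValRat 2 (X^2) = -(4*k) := by
    rw [padicValRat.pow X, hvX]; ring
  have vX3 : padicValRat 2 (X^3) = -(6*k) := by
    rw [padicValRat.pow X, hvX]; ring
  have hX2 : (X^2 : ℚ) ≠ 0 := pow_ne_zero _ hX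
  have hX3 : (X^3 : ℚ) ≠ 0 := pow_ne_zero _ hX
  have v881X2 : padicValRat 2 (-(881*X^2)) = -(4*k) := by
    rw [padicValRat.neg, padicValRat.mul (by norm_num) hX2, v881, vX2]; ring
  have v160X : padicValRat 2 (160000*X) = 8 - 2*k := by
    rw [padicValRat.mul (by norm_num) hX, v160000, hvX]; ring
  have vI1 : padicValRat 2 (X^3 + -(881*X^2)) = -(6*k) := by
    rw [add_eq_of_lt' hX3 (by rw [vX3, v881X2]; omega), vX3]
  have hI1 : (X^3 + -(881*X^2) : ℚ) ≠ 0 := ne_zero_of_v vI1 (by omega)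
  have vYsq : padicValRat 2 (Y^2) = -(6*k) := by
    rw [hC, show X^3 - 881*X^2 + 160000*X = X^3 + -(881*X^2) + 160000*X by ring,
      add_eq_of_lt' hI1 (by rw [vI1, v160X]; omega), vI1]
  have hY : Y ≠ 0 := by
    intro h; rw [h] at vYsq; simp [padicValRat.zero] at vYsq; omega
  have vY : padicValRat 2 Y = -(3*k) := by
    have := padicValRat.pow (p := 2) Y (k := 2)
    rw [vYsq] at this; omega
  have hd : X^2 - 160000 ≠ 0 := by
    intro h
    have hx2 : X^2 = 160000 := by linarith
    rw [hx2, v160000] at vX2; omega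
  have v3X2 : padicValRat 2 (3*X^2) = -(4*k) := by
    rw [padicValRat.mul (by norm_num) hX2, v3, vX2]; ring
  have h3X2 : (3*X^2 : ℚ) ≠ 0 := mul_ne_zero (by norm_num) hX2
  have v1762X : padicValRat 2 (-(1762*X)) = 1 - 2*k := by
    rw [padicValRat.neg, padicValRat.mul (by norm_num) hX, v1762, hvX]; ring
  have vI2 : padicValRat 2 (3*X^2 + -(1762*X)) = -(4*k) := by
    rw [add_eq_of_lt' h3X2 (by rw [v3X2, v1762X]; omega), v3X2]
  have hI2 : (3*X^2 + -(1762*X) : ℚ) ≠ 0 := ne_zero_of_v vI2 (by omega)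
  have vN : padicValRat 2 (3*X^2 - 1762*X + 160000) = -(4*k) := by
    rw [show (3*X^2 - 1762*X + 160000 : ℚ) = 3*X^2 + -(1762*X) + 160000 by ring,
      add_eq_of_lt' hI2 (by rw [vI2, v160000]; omega), vI2]
  have v2Y : padicValRat 2 (2*Y) = 1 - 3*k := by
    rw [padicValRat.mul (by norm_num) hY, v2two, vY]; ring
  refine ⟨hY, hd, vY, ?_⟩
  rw [padicValRat.div (ne_zero_of_v vN (by omega)) (mul_ne_zero (by norm_num) hY), vN, v2Y]
  omega

/-- valuation of the doubled X-coordinate -/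
lemma vXnew (X L : ℚ) (k : ℤ) (hk : 3 ≤ k)
    (hvX : padicValRat 2 X = -(2*k))
    (vL : padicValRat 2 L = -(k+1)) :
    padicValRat 2 (L^2 + 881 - 2*X) = -(2*(k+1)) := by
  have hX : X ≠ 0 := ne_zero_of_v hvX (by omega)
  have hL : L ≠ 0 := ne_zero_of_v vL (by omega)
  have vL2 : padicValRat 2 (L^2) = -(2*k+2) := by
    rw [padicValRat.pow L, vL]; ring
  have v2X : padicValRat 2 (-(2*X)) = 1 - 2*k := by
    rw [padicValRat.neg, padicValRat.mul (by norm_num) hX, v2two, hvX]; ring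
  have vI : padicValRat 2 (-(2*X) + 881) = 1 - 2*k := by
    rw [add_eq_of_lt' (ne_zero_of_v v2X (by omega)) (by rw [v2X, v881]; omega), v2X]
  rw [show L^2 + 881 - 2*X = L^2 + (-(2*X) + 881) by ring,
    add_eq_of_lt' (pow_ne_zero _ hL) (by rw [vL2, vI]; omega), vL2]
  ring

/-- the doubling step stays on the curve -/
lemma step_curve (X Y L X' Y' : ℚ) (hY : Y ≠ 0)
    (hC : Y^2 = X^3 - 881*X^2 + 160000*X)
    (hL : L = (3*X^2 - 1762*X + 160000)/(2*Y))
    (hX' : X' = L^2 + 881 - 2*X)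
    (hY' : Y' = L*(X - X') - Y) :
    Y'^2 = X'^3 - 881*X'^2 + 160000*X' := by
  subst hY' hX' hL
  field_simp
  rw [show Y^4 = (Y^2)^2 by ring, hC]; ring

/-- the doubling orbit of the point (4225, 245700) doubled once -/
def stepP (p : ℚ × ℚ) : ℚ × ℚ :=
  (((3*p.1^2 - 1762*p.1 + 160000)/(2*p.2))^2 + 881 - 2*p.1,
   ((3*p.1^2 - 1762*p.1 + 160000)/(2*p.2)) *
     (p.1 - (((3*p.1^2 - 1762*p.1 + 160000)/(2*p.2))^2 + 881 - 2*p.1)) - p.2)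

def P : ℕ → ℚ × ℚ
  | 0 => (6181890625/4769856, 313300730909375/10417365504)
  | n+1 => stepP (P n)

lemma P_inv (n : ℕ) :
    (P n).2^2 = (P n).1^3 - 881*(P n).1^2 + 160000*(P n).1 ∧
    padicValRat 2 (P n).1 = -(2*((n:ℤ)+3)) := by
  induction n with
  | zero =>
    constructor
    · show (313300730909375/10417365504 : ℚ)^2 = _
      norm_num [P]
    · show padicValRat 2 ((6181890625/4769856 : ℚ)) = -6
      rw [show (6181890625/4769856 : ℚ) = ((6181890625:ℕ):ℚ) / ((2:ℚ)^6 * ((74529:ℕ):ℚ)) by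
        norm_num]
      rw [padicValRat.div (by norm_num) (by norm_num),
        v2_powq 6 74529 (by decide) (by decide), v2_oddq 6181890625 (by norm_num)]
      rfl
  | succ n ih =>
    obtain ⟨hC, hv⟩ := ih
    obtain ⟨hY, -, -, vL⟩ := step_key (P n).1 (P n).2 ((n:ℤ)+3) (by omega) hC hv
    constructor
    · exact step_curve (P n).1 (P n).2 _ _ _ hY hC rfl rfl rfl
    · have := vXnew (P n).1 ((3*(P n).1^2 - 1762*(P n).1 + 160000)/(2*(P n).2))
        ((n:ℤ)+3) (by omega) hv vL
      show padicValRat 2 (stepP (P n)).1 = _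
      rw [show (stepP (P n)).1 =
        ((3*(P n).1^2 - 1762*(P n).1 + 160000)/(2*(P n).2))^2 + 881 - 2*(P n).1 from rfl, this]
      push_cast
      ring

/-- the sequence of x-coordinates on the unit circle -/
def xx (n : ℕ) : ℚ := 32*(P n).2 / ((P n).1^2 - 160000)

lemma xx_key (n : ℕ) : (xx n)^2 * (P (n+1)).1 = 256 := by
  obtain ⟨hC, hv⟩ := P_inv n
  obtain ⟨hY, hd, -, -⟩ := step_key (P n).1 (P n).2 ((n:ℤ)+3) (by omega) hC hv
  show (32*(P n).2 / ((P n).1^2 - 160000))^2 *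
    (((3*(P n).1^2 - 1762*(P n).1 + 160000)/(2*(P n).2))^2 + 881 - 2*(P n).1) = 256
  set X := (P n).1; set Y := (P n).2
  field_simp
  linear_combination (1024*(3524-8*X)) * hC

theorem stmt_16 :
    {x₁ : ℚ | (∃ y : ℚ, x₁^2 + y^2 = 1) ∧
      (∃ y : ℚ, ((5/4:ℚ)^2 * x₁)^2 + y^2 = 1)}.Infinite := by
  apply Set.infinite_of_injective_forall_mem (f := xx)
  · -- injectivity
    intro m n hmn
    have hm := xx_key m
    have hn := xx_key n
    have hx0 : xx n ≠ 0 := by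
      intro h; rw [h] at hn; norm_num at hn
    rw [hmn] at hm
    have hXeq : (P (m+1)).1 = (P (n+1)).1 :=
      mul_left_cancel₀ (pow_ne_zero 2 hx0) (by rw [hm, hn])
    have h1 := (P_inv (m+1)).2
    have h2 := (P_inv (n+1)).2
    rw [hXeq, h2] at h1
    have : (m:ℤ) = n := by push_cast at h1; omega
    exact_mod_cast this
  · -- membership
    intro n
    obtain ⟨hC, hv⟩ := P_inv n
    obtain ⟨hY, hd, -, -⟩ := step_key (P n).1 (P n).2 ((n:ℤ)+3) (by omega) hC hv
    set X := (P n).1; set Y := (P n).2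
    constructor
    · refine ⟨((X-256)^2+94464)/(X^2-160000), ?_⟩
      show (32*Y/(X^2-160000))^2 + _ = 1
      field_simp
      linear_combination 1024 * hC
    · refine ⟨((X-625)^2-230625)/(X^2-160000), ?_⟩
      show ((5/4:ℚ)^2 * (32*Y/(X^2-160000)))^2 + _ = 1
      field_simp
      linear_combination 640000 * hC
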